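/- For all positive integers n and r, the number D_{n,r} of r-colored permutations u ∈ 𝔖_n[ℤ_r] having no fixed point of zero color is equal to the number E_{n,r} of r-colored permutations u ∈ 𝔖_n[ℤ_r] for which the largest i ∈ {0,1,…,n} such that the numbers u(1),u(2),…,u(i) are in increasing order and all colored with the zero color is even. -/

import Mathlib

open scoped Classical

noncomputable section

/-! ### Permutation combinatorics -/

/-- The value `w(i)` (1-based, in `{1,…,n}`) of a permutation `w` of `{1,…,n}`,
realized as `Equiv.Perm (Fin n)`. -/
def permApp {n : ℕ} (w : Equiv.Perm (Fin n)) (i : ℕ) : ℕ :=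
  if h : i - 1 < n then (w ⟨i - 1, h⟩ : ℕ) + 1 else 0

/-- The descent set of a permutation, a subset of `{1,…,n-1}`. -/
def descentSet {n : ℕ} (w : Equiv.Perm (Fin n)) : Finset ℕ :=
  (Finset.Icc 1 (n - 1)).filter fun i => permApp w (i + 1) < permApp w i

/-- `numDescentSet m T` is the number of permutations in `𝔖_m` with descent set `T`. -/
def numDescentSet (m : ℕ) (T : Finset ℕ) : ℕ :=
  Nat.card {w : Equiv.Perm (Fin m) // descentSet w = T}

/-- The Coxeter length (number of inversions) of a permutation. -/
def invCount {n : ℕ} (w : Equiv.Perm (Fin n)) : ℕ :=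
  (Finset.univ.filter fun p : Fin n × Fin n => p.1 < p.2 ∧ w p.2 < w p.1).card

/-- For `S = {s_1 < s_2 < ⋯ < s_k} ⊆ {1,…,n-1}`, `sElt n S j = s_j`, with the
conventions `s_0 = 0` and `s_j = n` for `j > k`. -/
def sElt (n : ℕ) (S : Finset ℕ) (j : ℕ) : ℕ :=
  if j = 0 then 0 else if j ≤ S.card then (S.sort (· ≤ ·)).getD (j - 1) 0 else n

lemma sElt_of_gt (n : ℕ) (S : Finset ℕ) (j : ℕ) (h : S.card < j) : sElt n S j = n := by
  unfold sElt
  rw [if_neg (by omega), if_neg (by omega)]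

/-! ### Standard Young tableaux -/

/-- A standard Young tableau of shape `μ`: a filling of the cells of `μ` by the numbers
`1,…,μ.card`, each used once, strictly increasing along rows and columns
(the entry of a non-cell is `0`). -/
structure SYT (μ : YoungDiagram) where
  entry : ℕ → ℕ → ℕ
  entry_eq_zero : ∀ i j, (i, j) ∉ μ → entry i j = 0
  row_strict : ∀ i j1 j2, j1 < j2 → (i, j2) ∈ μ → entry i j1 < entry i j2
  col_strict : ∀ i1 i2 j, i1 < i2 → (i2, j) ∈ μ → entry i1 j < entry i2 j
  bijOn : Set.BijOn (fun p : ℕ × ℕ => entry p.1 p.2) ↑μ.cells ↑(Finset.Icc 1 μ.card)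

/-- The descent set of a standard Young tableau: those `k` such that `k+1` lies in a
strictly lower row than `k`. -/
def SYT.des {μ : YoungDiagram} (Q : SYT μ) : Finset ℕ :=
  (Finset.Icc 1 (μ.card - 1)).filter fun k =>
    ∃ p1 ∈ μ.cells, ∃ p2 ∈ μ.cells,
      Q.entry p1.1 p1.2 = k ∧ Q.entry p2.1 p2.2 = k + 1 ∧ p1.1 < p2.1

/-- `fSYTRow μ t` is the number of standard Young tableaux of shape `μ` whose first row
contains the numbers `1,…,t`. -/
def fSYTRow (μ : YoungDiagram) (t : ℕ) : ℕ :=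
  Nat.card {Q : SYT μ // ∀ k, 1 ≤ k → k ≤ t → ∃ j, (0, j) ∈ μ ∧ Q.entry 0 j = k}

/-! ### Irreducible characters of the symmetric group, via Jacobi–Trudi -/

/-- The number of functions `f : Fin n → Fin k` which are invariant under `g` and whose
fiber over `i` has `c i` elements.  For `c` a composition of `n`, the function
`g ↦ fixedYoungFns n k c g` is the character of the permutation representation of `𝔖_n`
on ordered set partitions of `{1,…,n}` of type `c`, i.e. of the representation induced
from the trivial representation of the corresponding Young subgroup. -/
def fixedYoungFns (n k : ℕ) (c : Fin k → ℤ) (g : Equiv.Perm (Fin n)) : ℕ :=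
  Nat.card {f : Fin n → Fin k //
    (∀ x, f (g x) = f x) ∧ ∀ i, ((Nat.card {x : Fin n // f x = i} : ℕ) : ℤ) = c i}

/-- The irreducible character `χ^μ` of `𝔖_n` associated to a partition `μ` of `n`
(encoded as a Young diagram with `n` cells), defined through the Jacobi–Trudi
determinantal formula `χ^μ = det (h_{μ_i - i + j})`. -/
def chi (n : ℕ) (μ : YoungDiagram) (g : Equiv.Perm (Fin n)) : ℤ :=
  ∑ σ : Equiv.Perm (Fin μ.rowLens.length),
    ((Equiv.Perm.sign σ : ℤˣ) : ℤ) *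
      (fixedYoungFns n μ.rowLens.length
        (fun i => ((μ.rowLen (i : ℕ) : ℕ) : ℤ) - ((i : ℕ) : ℤ) + ((σ i : ℕ) : ℤ)) g : ℤ)

/-! ### Posets, rank selection, maximal chains and characters -/

/-- The maximal chains of the subposet induced on a subset `A` of a poset. -/
def maxChainsIn {P : Type*} [Preorder P] (A : Set P) : Set (Set P) :=
  {C | C ⊆ A ∧ IsChain (· ≤ ·) C ∧
    ∀ D : Set P, D ⊆ A → IsChain (· ≤ ·) D → C ⊆ D → C = D}

/-- The rank-selected subposet `P_S = {x ∈ P : rk x ∈ S} ∪ {⊥, ⊤}`. -/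
def rankSel {P : Type*} [Preorder P] [OrderBot P] [OrderTop P] (rk : P → ℕ)
    (S : Finset ℕ) : Set P :=
  {x | rk x ∈ S} ∪ {⊥, ⊤}

/-- `a_P(S)`: the number of maximal chains of the rank-selected subposet `P_S`. -/
def chainCount {P : Type*} [Preorder P] [OrderBot P] [OrderTop P] (rk : P → ℕ)
    (S : Finset ℕ) : ℕ :=
  Set.ncard (maxChainsIn (rankSel rk S))

/-- `b_P(S) = Σ_{T ⊆ S} (-1)^{|S-T|} a_P(T)`. -/
def bDim {P : Type*} [Preorder P] [OrderBot P] [OrderTop P] (rk : P → ℕ)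
    (S : Finset ℕ) : ℤ :=
  ∑ T ∈ S.powerset, (-1 : ℤ) ^ (S.card - T.card) * (chainCount rk T : ℤ)

/-- The character of the permutation representation `α_P(S)` of a group `G` acting (via
`act`) on the maximal chains of the rank-selected subposet `P_S`: its value at `g` is
the number of maximal chains of `P_S` fixed by `g`. -/
def gAlpha {P G : Type*} [Preorder P] [OrderBot P] [OrderTop P] (rk : P → ℕ)
    (act : G → P → P) (S : Finset ℕ) (g : G) : ℤ :=
  (Set.ncard {C : Set P | C ∈ maxChainsIn (rankSel rk S) ∧ act g '' C = C} : ℤ)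

/-- The character of the virtual representation
`β_P(S) = Σ_{T ⊆ S} (-1)^{|S-T|} α_P(T)`. -/
def gBeta {P G : Type*} [Preorder P] [OrderBot P] [OrderTop P] (rk : P → ℕ)
    (act : G → P → P) (S : Finset ℕ) (g : G) : ℤ :=
  ∑ T ∈ S.powerset, (-1 : ℤ) ^ (S.card - T.card) * gAlpha rk act T g

/-! ### The poset of injective words -/

/-- An injective word over the alphabet `{1,…,n}`. -/
def InjWord (n : ℕ) : Type := {l : List (Fin n) // l.Nodup}

instance (n : ℕ) : PartialOrder (InjWord n) where
  le u v := u.1.Sublist v.1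
  le_refl u := List.Sublist.refl _
  le_trans u v w h1 h2 := List.Sublist.trans h1 h2
  le_antisymm u v h1 h2 := Subtype.ext (List.Sublist.antisymm h1 h2)

instance (n : ℕ) : OrderBot (InjWord n) where
  bot := ⟨[], List.nodup_nil⟩
  bot_le u := List.nil_sublist u.1

/-- The rank function of the poset of injective words (with a maximum adjoined):
the rank of a word is its length, and the rank of `⊤` is `n+1`. -/
def rkInj (n : ℕ) (x : WithTop (InjWord n)) : ℕ :=
  WithTop.recTopCoe (n + 1) (fun u => u.1.length) x

/-- The action of `𝔖_n` on injective words, letter by letter. -/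
def permWord {n : ℕ} (w : Equiv.Perm (Fin n)) (u : InjWord n) : InjWord n :=
  ⟨u.1.map w, u.2.map w.injective⟩

/-- The character of `α_{P_n}(S)` for the `𝔖_n`-action on the poset of injective words. -/
def injAlpha (n : ℕ) (S : Finset ℕ) (g : Equiv.Perm (Fin n)) : ℤ :=
  gAlpha (rkInj n) (fun w : Equiv.Perm (Fin n) => WithTop.map (permWord w)) S g

/-- The character of `β_{P_n}(S)` for the `𝔖_n`-action on the poset of injective words. -/
def injBeta (n : ℕ) (S : Finset ℕ) (g : Equiv.Perm (Fin n)) : ℤ :=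
  gBeta (rkInj n) (fun w : Equiv.Perm (Fin n) => WithTop.map (permWord w)) S g

/-! ### The poset of r-colored injective words -/

/-- An `r`-colored injective word over `{1,…,n}`: a word in the alphabet
`{1,…,n} × ℤ_r` whose letters have pairwise distinct first coordinates. -/
def CInjWord (n r : ℕ) : Type := {l : List (Fin n × ZMod r) // (l.map Prod.fst).Nodup}

instance (n r : ℕ) : PartialOrder (CInjWord n r) where
  le u v := u.1.Sublist v.1
  le_refl u := List.Sublist.refl _
  le_trans u v w h1 h2 := List.Sublist.trans h1 h2
  le_antisymm u v h1 h2 := Subtype.ext (List.Sublist.antisymm h1 h2)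

instance (n r : ℕ) : OrderBot (CInjWord n r) where
  bot := ⟨[], by simp⟩
  bot_le u := List.nil_sublist u.1

/-- The rank function of the poset `P_{n,r}` of `r`-colored injective words
(with a maximum adjoined). -/
def rkC (n r : ℕ) (x : WithTop (CInjWord n r)) : ℕ :=
  WithTop.recTopCoe (n + 1) (fun u => u.1.length) x

/-- The action of `𝔖_n` on `r`-colored injective words: act on the first coordinate
of each letter, leaving colors unchanged. -/
def permCWord {n r : ℕ} (w : Equiv.Perm (Fin n)) (u : CInjWord n r) : CInjWord n r :=
  ⟨u.1.map (fun p => (w p.1, p.2)), by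
    have h := u.2.map w.injective
    rw [List.map_map] at h ⊢
    exact h⟩

/-- The character of `α_{P_{n,r}}(S)`. -/
def cAlpha (n r : ℕ) (S : Finset ℕ) (g : Equiv.Perm (Fin n)) : ℤ :=
  gAlpha (rkC n r) (fun w : Equiv.Perm (Fin n) => WithTop.map (permCWord w)) S g

/-- The character of `β_{P_{n,r}}(S)`. -/
def cBeta (n r : ℕ) (S : Finset ℕ) (g : Equiv.Perm (Fin n)) : ℤ :=
  gBeta (rkC n r) (fun w : Equiv.Perm (Fin n) => WithTop.map (permCWord w)) S g

/-- `b_{P_{n,r}}(S)`, the dimension of `β_{P_{n,r}}(S)`. -/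
def cChainDim (n r : ℕ) (S : Finset ℕ) : ℤ := bDim (rkC n r) S

/-! ### The statistics τ -/

/-- `τ(w,Q)` for a permutation `w` with descent set `S = {s_1 < ⋯ < s_k}` and a standard
Young tableau `Q`: the largest `i ∈ {0,…,k+1}` such that (a) `w(x) = w_S(x)` for
`x > s_{k+1-i}` and (b) no descent of `Q` is smaller than `n - s_{k+1-i}`. -/
def tau (n : ℕ) (S : Finset ℕ) (wS w : Equiv.Perm (Fin n)) {μ : YoungDiagram}
    (Q : SYT μ) : ℕ :=
  ((Finset.range (S.card + 2)).filter
    (fun i => (∀ x, sElt n S (S.card + 1 - i) < x → x ≤ n → permApp w x = permApp wS x) ∧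
      (∀ d ∈ Q.des, n - sElt n S (S.card + 1 - i) ≤ d))).max'
    ⟨0, by
      have hs := sElt_of_gt n S (S.card + 1 - 0) (by omega)
      refine Finset.mem_filter.2 ⟨Finset.mem_range.2 (by omega), ?_, ?_⟩
      · intro x hx hx'
        rw [hs] at hx
        exact absurd hx (not_lt.2 hx')
      · intro d _
        rw [hs]
        omega⟩

/-- The condition that all the numbers `1,…,t` appear in the first row of the `r`-colored
standard Young tableau `(Q, c)` and are colored with the zero color (the color of the
entry `k` being `c (k-1)`). -/
def zeroFirstRow {μ : YoungDiagram} {r : ℕ} (Q : SYT μ) (c : Fin μ.card → ZMod r)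
    (t : ℕ) : Prop :=
  ∀ k : Fin μ.card, (k : ℕ) < t →
    ((∃ j, (0, j) ∈ μ ∧ Q.entry 0 j = (k : ℕ) + 1) ∧ c k = 0)

/-- `τ(w,Q)` for an `r`-colored standard Young tableau `(Q,c)`. -/
def ctau (n : ℕ) {r : ℕ} (S : Finset ℕ) (wS w : Equiv.Perm (Fin n)) {μ : YoungDiagram}
    (Q : SYT μ) (c : Fin μ.card → ZMod r) : ℕ :=
  ((Finset.range (S.card + 2)).filter
    (fun i => (∀ x, sElt n S (S.card + 1 - i) < x → x ≤ n → permApp w x = permApp wS x) ∧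
      zeroFirstRow Q c (n - sElt n S (S.card + 1 - i)))).max'
    ⟨0, by
      have hs := sElt_of_gt n S (S.card + 1 - 0) (by omega)
      refine Finset.mem_filter.2 ⟨Finset.mem_range.2 (by omega), ?_, ?_⟩
      · intro x hx hx'
        rw [hs] at hx
        exact absurd hx (not_lt.2 hx')
      · rw [hs]
        intro k hk
        exact absurd hk (by omega)⟩

/-- The largest `i ∈ {0,…,n}` such that all the numbers `1,…,i` appear in the first row
of the `r`-colored standard Young tableau `(Q,c)` and are colored with the zero color. -/
def mQ (n : ℕ) {r : ℕ} {μ : YoungDiagram} (Q : SYT μ) (c : Fin μ.card → ZMod r) : ℕ :=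
  ((Finset.range (n + 1)).filter (fun i => zeroFirstRow Q c i)).max'
    ⟨0, Finset.mem_filter.2 ⟨Finset.mem_range.2 (by omega),
      fun k hk => absurd hk (by omega)⟩⟩

/-- The condition, for an `r`-colored permutation `(π, c)` (the color of the entry
`π(x)` in one-line notation being `c (x-1)`), that the entries `π(1),…,π(t)` are in
increasing order and all colored with the zero color. -/
def zeroIncreasing {n r : ℕ} (π : Equiv.Perm (Fin n)) (c : Fin n → ZMod r) (t : ℕ) : Prop :=
  (∀ x y, 1 ≤ x → x < y → y ≤ t → permApp π x < permApp π y) ∧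
  ∀ k : Fin n, (k : ℕ) < t → c k = 0

/-- `τ(w,u)` for an `r`-colored permutation `u = (π, c)`. -/
def tauU (n : ℕ) {r : ℕ} (S : Finset ℕ) (wS w : Equiv.Perm (Fin n))
    (π : Equiv.Perm (Fin n)) (c : Fin n → ZMod r) : ℕ :=
  ((Finset.range (S.card + 2)).filter
    (fun i => (∀ x, sElt n S (S.card + 1 - i) < x → x ≤ n → permApp w x = permApp wS x) ∧
      zeroIncreasing π c (n - sElt n S (S.card + 1 - i)))).max'
    ⟨0, by
      have hs := sElt_of_gt n S (S.card + 1 - 0) (by omega)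
      refine Finset.mem_filter.2 ⟨Finset.mem_range.2 (by omega), ?_, ?_, ?_⟩
      · intro x hx hx'
        rw [hs] at hx
        exact absurd hx (not_lt.2 hx')
      · intro x y hx hxy hy
        rw [hs] at hy
        exact absurd hy (by omega)
      · rw [hs]
        intro k hk
        exact absurd hk (by omega)⟩

/-- The largest `i ∈ {0,…,n}` such that the entries `π(1),…,π(i)` of the `r`-colored
permutation `(π,c)` are in increasing order and all colored with the zero color. -/
def mU (n : ℕ) {r : ℕ} (π : Equiv.Perm (Fin n)) (c : Fin n → ZMod r) : ℕ :=
  ((Finset.range (n + 1)).filter (fun i => zeroIncreasing π c i)).max'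
    ⟨0, Finset.mem_filter.2 ⟨Finset.mem_range.2 (by omega),
      fun x y hx hxy hy => absurd hy (by omega),
      fun k hk => absurd hk (by omega)⟩⟩

/-- `a_m(T)`: the number of chains in the Boolean lattice `B_m` whose elements have
set of ranks (cardinalities) equal to `T`. -/
def boolChains (m : ℕ) (T : Finset ℕ) : ℕ :=
  Nat.card {c : Finset (Finset (Fin m)) //
    IsChain (· ⊆ ·) (↑c : Set (Finset (Fin m))) ∧ c.image Finset.card = T}

end


/-! ### Auxiliary lemmas for the proof -/

section AuxProof

open Finset Equiv

/-- Strict increase of the first `i` entries, phrased at the level of `Fin n`. -/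
def pPerm (n i : ℕ) (π : Equiv.Perm (Fin n)) : Prop :=
  ∀ a b : Fin n, a < b → (b : ℕ) < i → π a < π b

/-- The first `i` colors are zero. -/
def pCol (n r i : ℕ) (c : Fin n → ZMod r) : Prop :=
  ∀ k : Fin n, (k : ℕ) < i → c k = 0

lemma permApp_coe {n : ℕ} (π : Equiv.Perm (Fin n)) (a : Fin n) :
    permApp π ((a : ℕ) + 1) = (π a : ℕ) + 1 := by
  have h : (a : ℕ) + 1 - 1 < n := by simpa using a.2
  have ha : (⟨(a : ℕ) + 1 - 1, h⟩ : Fin n) = a := Fin.ext (by simp)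
  rw [permApp, dif_pos h, ha]

lemma zeroIncreasing_iff {n r i : ℕ} (hi : i ≤ n) (π : Equiv.Perm (Fin n))
    (c : Fin n → ZMod r) :
    zeroIncreasing π c i ↔ pPerm n i π ∧ pCol n r i c := by
  constructor
  · rintro ⟨h1, h2⟩
    refine ⟨fun a b hab hb => ?_, h2⟩
    have := h1 ((a : ℕ) + 1) ((b : ℕ) + 1) (by omega)
      (by have := Fin.lt_def.1 hab; omega) (by omega)
    rw [permApp_coe, permApp_coe] at this
    exact Fin.lt_def.2 (by omega)
  · rintro ⟨h1, h2⟩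
    refine ⟨fun x y hx hxy hy => ?_, h2⟩
    have hx' : x - 1 < n := by omega
    have hy' : y - 1 < n := by omega
    have h := h1 ⟨x - 1, hx'⟩ ⟨y - 1, hy'⟩ (Fin.lt_def.2 (by simp; omega)) (by simp; omega)
    rw [permApp, dif_pos hx', permApp, dif_pos hy']
    have := Fin.lt_def.1 h
    omega

lemma zeroIncreasing_mono {n r : ℕ} {π : Equiv.Perm (Fin n)} {c : Fin n → ZMod r} {s t : ℕ}
    (hst : s ≤ t) (h : zeroIncreasing π c t) : zeroIncreasing π c s :=
  ⟨fun x y hx hxy hy => h.1 x y hx hxy (by omega), fun k hk => h.2 k (by omega)⟩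

lemma not_zeroIncreasing_succ {n r : ℕ} (hn : 0 < n) (π : Equiv.Perm (Fin n))
    (c : Fin n → ZMod r) : ¬ zeroIncreasing π c (n + 1) := by
  rintro ⟨h1, -⟩
  have h := h1 n (n + 1) (by omega) (by omega) le_rfl
  have h2 : permApp π (n + 1) = 0 := by rw [permApp, dif_neg (by omega)]
  omega

lemma mU_mem {n r : ℕ} (π : Equiv.Perm (Fin n)) (c : Fin n → ZMod r) :
    mU n π c ∈ (Finset.range (n + 1)).filter (fun i => zeroIncreasing π c i) := by
  unfold mU
  exact Finset.max'_mem _ _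

lemma mU_le {n r : ℕ} (π : Equiv.Perm (Fin n)) (c : Fin n → ZMod r) : mU n π c ≤ n := by
  have := (Finset.mem_filter.1 (mU_mem π c)).1
  have := Finset.mem_range.1 this
  omega

lemma zeroIncreasing_mU {n r : ℕ} (π : Equiv.Perm (Fin n)) (c : Fin n → ZMod r) :
    zeroIncreasing π c (mU n π c) :=
  (Finset.mem_filter.1 (mU_mem π c)).2

lemma le_mU {n r : ℕ} {i : ℕ} (hi : i ≤ n) {π : Equiv.Perm (Fin n)} {c : Fin n → ZMod r}
    (h : zeroIncreasing π c i) : i ≤ mU n π c := by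
  unfold mU
  exact Finset.le_max' _ i (Finset.mem_filter.2 ⟨Finset.mem_range.2 (by omega), h⟩)

lemma mU_eq_iff {n r : ℕ} (hn : 0 < n) {i : ℕ} (hi : i ≤ n) (π : Equiv.Perm (Fin n))
    (c : Fin n → ZMod r) :
    mU n π c = i ↔ zeroIncreasing π c i ∧ ¬ zeroIncreasing π c (i + 1) := by
  constructor
  · intro h
    refine ⟨h ▸ zeroIncreasing_mU π c, fun hzi => ?_⟩
    rcases Nat.lt_or_ge i n with hlt | hge
    · have := le_mU (by omega) hzi
      omega
    · have : i = n := by omega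
      exact not_zeroIncreasing_succ hn π c (this ▸ hzi)
  · rintro ⟨h1, h2⟩
    have hle := le_mU hi h1
    rcases Nat.lt_or_ge i (mU n π c) with hlt | hge
    · exact absurd (zeroIncreasing_mono hlt (zeroIncreasing_mU π c)) h2
    · omega

/-- The subtype of `Fin n` of elements below `i ≤ n` is equivalent to `Fin i`. -/
def eLt {n i : ℕ} (hi : i ≤ n) : {a : Fin n // (a : ℕ) < i} ≃ Fin i where
  toFun a := ⟨a.1.1, a.2⟩
  invFun j := ⟨⟨j.1, lt_of_lt_of_le j.2 hi⟩, j.2⟩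
  left_inv a := rfl
  right_inv j := rfl

lemma card_lt_subtype {n i : ℕ} (hi : i ≤ n) :
    Nat.card {a : Fin n // (a : ℕ) < i} = i := by
  rw [Nat.card_congr (eLt hi), Nat.card_eq_fintype_card, Fintype.card_fin]

lemma card_not_lt {n i : ℕ} (hi : i ≤ n) :
    Nat.card {a : Fin n // ¬ (a : ℕ) < i} = n - i := by
  classical
  have h1 := card_lt_subtype hi
  rw [Nat.card_eq_fintype_card] at h1 ⊢
  rw [Fintype.card_subtype_compl, Fintype.card_fin]
  omega

lemma card_fixing {n : ℕ} (p : Fin n → Prop) :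
    Nat.card {σ : Equiv.Perm (Fin n) // ∀ a, p a → σ a = a} =
      (Nat.card {a : Fin n // ¬ p a}).factorial := by
  classical
  have e2 : {f : Equiv.Perm (Fin n) // ∀ a, ¬¬ p a → f a = a} ≃
      {f : Equiv.Perm (Fin n) // ∀ a, p a → f a = a} :=
    Equiv.subtypeEquivRight (fun f => by
      constructor <;> intro h a ha
      · exact h a (not_not_intro ha)
      · exact h a (not_not.1 ha))
  rw [← Nat.card_congr ((Equiv.Perm.subtypeEquivSubtypePerm
    (fun a : Fin n => ¬ p a)).trans e2), Nat.card_eq_fintype_card, Fintype.card_perm,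
    Nat.card_eq_fintype_card]

lemma card_pPerm {n i : ℕ} (hi : i ≤ n) :
    (Finset.univ.filter (pPerm n i)).card = n.choose i * (n - i).factorial := by
  classical
  set Pos : Finset (Fin n) := Finset.univ.filter (fun a : Fin n => (a : ℕ) < i) with hPos
  have hPosCard : Pos.card = i := by
    rw [hPos, ← Fintype.card_subtype, ← Nat.card_eq_fintype_card]
    exact card_lt_subtype hi
  have hφ : ∀ π ∈ Finset.univ.filter (pPerm n i),
      Pos.image π ∈ Finset.powersetCard i (Finset.univ : Finset (Fin n)) := by
    intro π _
    rw [Finset.mem_powersetCard]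
    exact ⟨Finset.subset_univ _,
      by rw [Finset.card_image_of_injective _ π.injective, hPosCard]⟩
  rw [Finset.card_eq_sum_card_fiberwise hφ]
  have hfib : ∀ S ∈ Finset.powersetCard i (Finset.univ : Finset (Fin n)),
      ((Finset.univ.filter (pPerm n i)).filter (fun π : Equiv.Perm (Fin n) => Pos.image ⇑π = S)).card
        = (n - i).factorial := by
    intro S hS
    obtain ⟨-, hScard⟩ := Finset.mem_powersetCard.1 hS
    have key : ∀ π : Equiv.Perm (Fin n), pPerm n i π → Pos.image π = S →
        ∀ a : Fin n, ∀ ha : (a : ℕ) < i, π a = S.orderEmbOfFin hScard ⟨a.1, ha⟩ := by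
      intro π hπ hπS a ha
      have hmono : StrictMono (fun j : Fin i => π ⟨j.1, lt_of_lt_of_le j.2 hi⟩) := by
        intro j1 j2 hj
        exact hπ _ _ (Fin.mk_lt_mk.2 (Fin.lt_def.1 hj)) j2.2
      have hmem : ∀ j : Fin i, π ⟨j.1, lt_of_lt_of_le j.2 hi⟩ ∈ S := by
        intro j
        rw [← hπS]
        exact Finset.mem_image_of_mem _ (by simp [hPos])
      have heq := Finset.orderEmbOfFin_unique hScard hmem hmono
      have h2 := congrFun heq ⟨a.1, ha⟩
      simpa using h2
    have hcompl : Fintype.card {a : Fin n // ¬ (a : ℕ) < i}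
        = Fintype.card {x : Fin n // ¬ x ∈ S} := by
      rw [← Nat.card_eq_fintype_card, card_not_lt hi, Fintype.card_subtype_compl,
        Fintype.card_fin, Fintype.card_coe, hScard]
    obtain ⟨eR⟩ := Fintype.card_eq.1 hcompl
    set eL : {a : Fin n // (a : ℕ) < i} ≃ {x : Fin n // x ∈ S} :=
      (eLt hi).trans (S.orderIsoOfFin hScard).toEquiv with heL
    set π₀ : Equiv.Perm (Fin n) :=
      ((Equiv.sumCompl (fun a : Fin n => (a : ℕ) < i)).symm.trans
        ((eL.sumCongr eR).trans (Equiv.sumCompl (fun x : Fin n => x ∈ S)))) with hπ₀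
    have hπ₀app : ∀ a : Fin n, ∀ ha : (a : ℕ) < i,
        π₀ a = S.orderEmbOfFin hScard ⟨a.1, ha⟩ := by
      intro a ha
      rw [hπ₀]
      simp only [Equiv.trans_apply]
      rw [Equiv.sumCompl_symm_apply_of_pos (p := fun a : Fin n => (a : ℕ) < i) ha]
      simp only [Equiv.sumCongr_apply, Sum.map_inl, Equiv.sumCompl_apply_inl]
      rw [heL]
      simp only [Equiv.trans_apply]
      rw [← Finset.coe_orderIsoOfFin_apply]
      rfl
    have hπ₀P : pPerm n i π₀ := by
      intro a b hab hb
      have ha : (a : ℕ) < i := lt_trans (Fin.lt_def.1 hab) hb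
      rw [hπ₀app a ha, hπ₀app b hb]
      exact (S.orderEmbOfFin hScard).strictMono (Fin.lt_def.2 (Fin.lt_def.1 hab))
    have hπ₀S : Pos.image π₀ = S := by
      apply Finset.eq_of_subset_of_card_le
      · intro x hx
        obtain ⟨a, ha, rfl⟩ := Finset.mem_image.1 hx
        have ha' : (a : ℕ) < i := by
          rw [hPos] at ha
          simpa using ha
        rw [hπ₀app a ha']
        exact Finset.orderEmbOfFin_mem S hScard _
      · rw [Finset.card_image_of_injective _ π₀.injective, hPosCard, hScard]
    have hbij : ((Finset.univ.filter (pPerm n i)).filter (fun π : Equiv.Perm (Fin n) => Pos.image ⇑π = S)).card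
        = (Finset.univ.filter
            (fun τ : Equiv.Perm (Fin n) => ∀ a : Fin n, (a : ℕ) < i → τ a = a)).card := by
      apply Finset.card_bij (fun π _ => π₀⁻¹ * π)
      · intro π hπ
        simp only [Finset.mem_filter, Finset.mem_univ, true_and] at hπ ⊢
        intro a ha
        have := key π hπ.1 hπ.2 a ha
        rw [Equiv.Perm.mul_apply, this, ← hπ₀app a ha]
        exact π₀.symm_apply_apply a
      · intro π1 h1 π2 h2 h
        exact mul_left_cancel h
      · intro τ hτ
        simp only [Finset.mem_filter, Finset.mem_univ, true_and] at hτ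
        refine ⟨π₀ * τ, ?_, by group⟩
        simp only [Finset.mem_filter, Finset.mem_univ, true_and]
        have happ : ∀ a : Fin n, (a : ℕ) < i → (π₀ * τ) a = π₀ a := by
          intro a ha
          rw [Equiv.Perm.mul_apply, hτ a ha]
        constructor
        · intro a b hab hb
          have ha : (a : ℕ) < i := lt_trans (Fin.lt_def.1 hab) hb
          rw [happ a ha, happ b hb]
          exact hπ₀P a b hab hb
        · rw [← hπ₀S]
          apply Finset.image_congr
          intro a ha
          rw [hPos] at ha
          exact happ a (by simpa using ha)
    rw [hbij, ← Fintype.card_subtype, ← Nat.card_eq_fintype_card]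
    exact (card_fixing (fun a : Fin n => (a : ℕ) < i)).trans
      (congrArg Nat.factorial (card_not_lt hi))
  rw [Finset.sum_congr rfl hfib, Finset.sum_const, Finset.card_powersetCard,
    Finset.card_univ, Fintype.card_fin, smul_eq_mul]

lemma card_pCol {n r i : ℕ} [NeZero r] (hi : i ≤ n) :
    (Finset.univ.filter (pCol n r i)).card = r ^ (n - i) := by
  classical
  rw [← Fintype.card_subtype]
  have e : {c : Fin n → ZMod r // pCol n r i c} ≃ ({a : Fin n // ¬ (a : ℕ) < i} → ZMod r) :=
    { toFun := fun c a => c.1 a.1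
      invFun := fun g => ⟨fun k => if h : (k : ℕ) < i then 0 else g ⟨k, h⟩,
        fun k hk => by simp [hk]⟩
      left_inv := fun c => Subtype.ext (funext fun k => by
        by_cases h : (k : ℕ) < i
        · simp [h, c.2 k h]
        · simp [h])
      right_inv := fun g => funext fun a => by simp [a.2] }
  rw [Fintype.card_congr e, Fintype.card_fun, ZMod.card, ← Nat.card_eq_fintype_card,
    card_not_lt hi]

lemma card_Z {n r i : ℕ} [NeZero r] (hi : i ≤ n) :
    (Finset.univ.filter (fun u : Equiv.Perm (Fin n) × (Fin n → ZMod r) =>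
      zeroIncreasing u.1 u.2 i)).card = n.choose i * (n - i).factorial * r ^ (n - i) := by
  classical
  have hset : (Finset.univ.filter (fun u : Equiv.Perm (Fin n) × (Fin n → ZMod r) =>
      zeroIncreasing u.1 u.2 i))
      = (Finset.univ.filter (pPerm n i)) ×ˢ (Finset.univ.filter (pCol n r i)) := by
    ext u
    simp only [Finset.mem_filter, Finset.mem_product, Finset.mem_univ, true_and]
    exact zeroIncreasing_iff hi u.1 u.2
  rw [hset, Finset.card_product, card_pPerm hi, card_pCol hi]

lemma telescope_sum (g : ℕ → ℤ) (n : ℕ) :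
    ∑ i ∈ Finset.range (n + 1), (if Even i then g i - g (i + 1) else 0)
      = ∑ i ∈ Finset.range (n + 1), (-1) ^ i * g i - (if Even n then g (n + 1) else 0) := by
  induction n with
  | zero => simp
  | succ m ih =>
    rw [Finset.sum_range_succ, ih,
      Finset.sum_range_succ (f := fun i => (-1 : ℤ) ^ i * g i) (n := m + 1)]
    by_cases h : Even m
    · have h1 : ¬ Even (m + 1) := by simp [Nat.even_add_one, h]
      rw [if_pos h, if_neg h1, if_neg h1, Odd.neg_one_pow (Nat.not_even_iff_odd.1 h1)]
      ring
    · have h1 : Even (m + 1) := Nat.even_add_one.2 h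
      rw [if_neg h, if_pos h1, if_pos h1, Even.neg_one_pow h1]
      ring

end AuxProof

/-- **D´esarménien-type identity**: `D_{n,r} = E_{n,r}`, i.e. the number of `r`-colored
permutations with no fixed point of zero color equals the number of `r`-colored
permutations `u` for which the largest `i ∈ {0,1,…,n}` such that `u(1),…,u(i)` are in
increasing order and all colored with the zero color is even. -/
theorem statement19 (n r : ℕ) (hn : 0 < n) (hr : 0 < r) :
    Nat.card {u : Equiv.Perm (Fin n) × (Fin n → ZMod r) //
        ∀ i : Fin n, ¬(u.1 i = i ∧ u.2 i = 0)} =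
      Nat.card {u : Equiv.Perm (Fin n) × (Fin n → ZMod r) // Even (mU n u.1 u.2)} := by
  classical
  haveI : NeZero r := ⟨hr.ne'⟩
  have hr1 : 1 ≤ r := hr
  -- the common alternating sum
  set g : ℕ → ℤ := fun j => (n.choose j : ℤ) * ((n - j).factorial : ℤ) * (r : ℤ) ^ (n - j)
    with hg
  -- ### D side
  have hD : (Nat.card {u : Equiv.Perm (Fin n) × (Fin n → ZMod r) //
      ∀ i : Fin n, ¬(u.1 i = i ∧ u.2 i = 0)} : ℤ)
      = ∑ k ∈ Finset.range (n + 1), (-1 : ℤ) ^ k * g k := by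
    have h1 : (Finset.univ.filter (fun u : Equiv.Perm (Fin n) × (Fin n → ZMod r) =>
        ∀ i : Fin n, ¬(u.1 i = i ∧ u.2 i = 0))).card
        = ∑ π : Equiv.Perm (Fin n), (Finset.univ.filter
            (fun c : Fin n → ZMod r => ∀ i : Fin n, ¬(π i = i ∧ c i = 0))).card := by
      rw [Finset.card_eq_sum_card_fiberwise (f := Prod.fst) (t := Finset.univ)
        (fun u _ => Finset.mem_univ _)]
      apply Finset.sum_congr rfl
      intro π _
      apply Finset.card_bij (fun u _ => u.2)
      · intro u hu
        simp only [Finset.mem_filter, Finset.mem_univ, true_and] at hu ⊢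
        obtain ⟨h, rfl⟩ := hu
        exact h
      · intro u1 h1 u2 h2 h
        simp only [Finset.mem_filter, Finset.mem_univ, true_and] at h1 h2
        exact Prod.ext (h1.2.trans h2.2.symm) h
      · intro c hc
        simp only [Finset.mem_filter, Finset.mem_univ, true_and] at hc
        exact ⟨(π, c), Finset.mem_filter.2
          ⟨Finset.mem_filter.2 ⟨Finset.mem_univ _, hc⟩, rfl⟩, rfl⟩
    have h2 : ∀ π : Equiv.Perm (Fin n),
        (Finset.univ.filter (fun c : Fin n → ZMod r =>
          ∀ i : Fin n, ¬(π i = i ∧ c i = 0))).card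
        = ∏ i : Fin n, (if π i = i then r - 1 else r) := by
      intro π
      rw [← Fintype.card_subtype]
      rw [Fintype.card_congr (Equiv.subtypePiEquivPi
        (p := fun (i : Fin n) (x : ZMod r) => ¬(π i = i ∧ x = 0)))]
      rw [Fintype.card_pi]
      apply Finset.prod_congr rfl
      intro i _
      by_cases h : π i = i
      · rw [if_pos h]
        have e : {x : ZMod r // ¬(π i = i ∧ x = 0)} ≃ {x : ZMod r // ¬ x = 0} :=
          Equiv.subtypeEquivRight (fun x => by simp [h])
        rw [Fintype.card_congr e, Fintype.card_subtype_compl, ZMod.card,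
          Fintype.card_subtype_eq]
      · rw [if_neg h]
        have e : {x : ZMod r // ¬(π i = i ∧ x = 0)} ≃ ZMod r :=
          Equiv.subtypeUnivEquiv (fun x => by simp [h])
        rw [Fintype.card_congr e, ZMod.card]
    rw [Nat.card_eq_fintype_card, Fintype.card_subtype, h1, Nat.cast_sum]
    have h3 : ∀ π : Equiv.Perm (Fin n),
        (((Finset.univ.filter (fun c : Fin n → ZMod r =>
          ∀ i : Fin n, ¬(π i = i ∧ c i = 0))).card : ℕ) : ℤ)
        = ∏ i : Fin n, (if π i = i then (r : ℤ) - 1 else (r : ℤ)) := by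
      intro π
      rw [h2 π, Nat.cast_prod]
      apply Finset.prod_congr rfl
      intro i _
      split_ifs
      · rw [Nat.cast_sub hr1, Nat.cast_one]
      · rfl
    rw [Finset.sum_congr rfl (fun π _ => h3 π)]
    have h4 : ∀ π : Equiv.Perm (Fin n),
        ∏ i : Fin n, (if π i = i then (r : ℤ) - 1 else (r : ℤ))
        = ∑ F ∈ (Finset.univ : Finset (Fin n)).powerset,
            (if ∀ i ∈ F, π i = i then (-1 : ℤ) ^ F.card else 0) * (r : ℤ) ^ (n - F.card) := by
      intro π
      have hsplit : ∀ i : Fin n, (if π i = i then (r : ℤ) - 1 else (r : ℤ))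
          = (if π i = i then (-1 : ℤ) else 0) + (r : ℤ) := by
        intro i; split_ifs <;> ring
      rw [Finset.prod_congr rfl (fun i _ => hsplit i), Finset.prod_add]
      apply Finset.sum_congr rfl
      intro F hF
      congr 1
      · by_cases h : ∀ i ∈ F, π i = i
        · rw [if_pos h, Finset.prod_congr rfl (fun i hi => if_pos (h i hi)),
            Finset.prod_const]
        · rw [if_neg h]
          push_neg at h
          obtain ⟨i, hi, hne⟩ := h
          exact Finset.prod_eq_zero hi (if_neg hne)
      · rw [Finset.prod_const, Finset.card_sdiff_of_subset (Finset.mem_powerset.1 hF),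
          Finset.card_univ, Fintype.card_fin]
    rw [Finset.sum_congr rfl (fun π _ => h4 π), Finset.sum_comm]
    have h5 : ∀ F ∈ (Finset.univ : Finset (Fin n)).powerset,
        (∑ π : Equiv.Perm (Fin n),
          (if ∀ i ∈ F, π i = i then (-1 : ℤ) ^ F.card else 0) * (r : ℤ) ^ (n - F.card))
        = (-1 : ℤ) ^ F.card * ((n - F.card).factorial : ℤ) * (r : ℤ) ^ (n - F.card) := by
      intro F _
      rw [← Finset.sum_mul]
      have hsum : (∑ π : Equiv.Perm (Fin n),
          (if ∀ i ∈ F, π i = i then (-1 : ℤ) ^ F.card else 0))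
          = ((Finset.univ.filter
              (fun π : Equiv.Perm (Fin n) => ∀ i ∈ F, π i = i)).card : ℕ) • ((-1 : ℤ) ^ F.card) := by
        rw [Finset.sum_ite, Finset.sum_const, Finset.sum_const_zero, add_zero]
      have hcard : (Finset.univ.filter
          (fun π : Equiv.Perm (Fin n) => ∀ i ∈ F, π i = i)).card = (n - F.card).factorial := by
        rw [← Fintype.card_subtype, ← Nat.card_eq_fintype_card]
        refine (card_fixing (fun a : Fin n => a ∈ F)).trans (congrArg Nat.factorial ?_)
        rw [Nat.card_eq_fintype_card, Fintype.card_subtype_compl, Fintype.card_fin,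
          Fintype.card_coe]
      rw [hsum, hcard, nsmul_eq_mul]
      ring
    rw [Finset.sum_congr rfl h5]
    rw [Finset.sum_powerset]
    have hcu : (Finset.univ : Finset (Fin n)).card = n := by
      rw [Finset.card_univ, Fintype.card_fin]
    rw [hcu]
    apply Finset.sum_congr rfl
    intro k hk
    have hconst : ∀ F ∈ Finset.powersetCard k (Finset.univ : Finset (Fin n)),
        (-1 : ℤ) ^ F.card * ((n - F.card).factorial : ℤ) * (r : ℤ) ^ (n - F.card)
        = (-1 : ℤ) ^ k * (((n - k).factorial : ℤ) * (r : ℤ) ^ (n - k)) := by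
      intro F hF
      rw [(Finset.mem_powersetCard.1 hF).2]
      ring
    rw [Finset.sum_congr rfl hconst, Finset.sum_const, Finset.card_powersetCard, hcu,
      nsmul_eq_mul, hg]
    push_cast
    ring
  -- ### E side
  have hg_succ : g (n + 1) = 0 := by
    rw [hg]
    simp [Nat.choose_eq_zero_of_lt (Nat.lt_succ_self n)]
  have hZcard : ∀ j ≤ n + 1, (((Finset.univ.filter
      (fun u : Equiv.Perm (Fin n) × (Fin n → ZMod r) =>
        zeroIncreasing u.1 u.2 j)).card : ℕ) : ℤ) = g j := by
    intro j hj
    rcases Nat.lt_or_ge j (n + 1) with h | h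
    · rw [card_Z (by omega), hg]
      push_cast
      ring
    · have hj' : j = n + 1 := by omega
      subst hj'
      rw [Finset.card_eq_zero.2 (Finset.filter_eq_empty_iff.2
        (fun u _ => not_zeroIncreasing_succ hn u.1 u.2)), hg_succ, Nat.cast_zero]
  have hsub : ∀ j : ℕ, (Finset.univ.filter
      (fun u : Equiv.Perm (Fin n) × (Fin n → ZMod r) => zeroIncreasing u.1 u.2 (j + 1)))
      ⊆ (Finset.univ.filter (fun u : Equiv.Perm (Fin n) × (Fin n → ZMod r) =>
        zeroIncreasing u.1 u.2 j)) := by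
    intro j u hu
    simp only [Finset.mem_filter, Finset.mem_univ, true_and] at hu ⊢
    exact zeroIncreasing_mono (Nat.le_succ j) hu
  have hMcard : ∀ i ≤ n, (((Finset.univ.filter
      (fun u : Equiv.Perm (Fin n) × (Fin n → ZMod r) => mU n u.1 u.2 = i)).card : ℕ) : ℤ)
      = g i - g (i + 1) := by
    intro i hi
    have hMF : (Finset.univ.filter
        (fun u : Equiv.Perm (Fin n) × (Fin n → ZMod r) => mU n u.1 u.2 = i))
        = (Finset.univ.filter (fun u : Equiv.Perm (Fin n) × (Fin n → ZMod r) =>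
            zeroIncreasing u.1 u.2 i))
          \ (Finset.univ.filter (fun u : Equiv.Perm (Fin n) × (Fin n → ZMod r) =>
            zeroIncreasing u.1 u.2 (i + 1))) := by
      ext u
      simp only [Finset.mem_sdiff, Finset.mem_filter, Finset.mem_univ, true_and]
      rw [mU_eq_iff hn hi]
    rw [hMF, Finset.card_sdiff_of_subset (hsub i),
      Nat.cast_sub (Finset.card_le_card (hsub i)), hZcard i (by omega),
      hZcard (i + 1) (by omega)]
  have hE : (Nat.card {u : Equiv.Perm (Fin n) × (Fin n → ZMod r) //
      Even (mU n u.1 u.2)} : ℤ)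
      = ∑ k ∈ Finset.range (n + 1), (-1 : ℤ) ^ k * g k := by
    rw [Nat.card_eq_fintype_card, Fintype.card_subtype]
    rw [Finset.card_eq_sum_card_fiberwise
      (f := fun u : Equiv.Perm (Fin n) × (Fin n → ZMod r) => mU n u.1 u.2)
      (t := (Finset.range (n + 1)).filter (fun i => Even i))
      (fun u hu => Finset.mem_filter.2 ⟨Finset.mem_range.2
        (by simpa using Nat.lt_succ_of_le (mU_le u.1 u.2)), (Finset.mem_filter.1 hu).2⟩)]
    have hfib : ∀ i ∈ (Finset.range (n + 1)).filter (fun i => Even i),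
        ((Finset.univ.filter (fun u : Equiv.Perm (Fin n) × (Fin n → ZMod r) =>
          Even (mU n u.1 u.2))).filter (fun u => mU n u.1 u.2 = i)).card
        = (Finset.univ.filter (fun u : Equiv.Perm (Fin n) × (Fin n → ZMod r) =>
          mU n u.1 u.2 = i)).card := by
      intro i hi
      congr 1
      ext u
      simp only [Finset.mem_filter, Finset.mem_univ, true_and]
      constructor
      · rintro ⟨-, h⟩; exact h
      · intro h; exact ⟨h ▸ (Finset.mem_filter.1 hi).2, h⟩
    rw [Finset.sum_congr rfl hfib, Nat.cast_sum]
    rw [Finset.sum_congr rfl (fun i hi => hMcard i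
      (by have := Finset.mem_range.1 (Finset.mem_filter.1 hi).1; omega))]
    rw [Finset.sum_filter, telescope_sum g n, hg_succ]
    simp
  rw [← Nat.cast_inj (R := ℤ), hD, hE]
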